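/- Under the standing parameter assumptions with G ≥ 0 fixed, regard the minimum steady-state MSD D^min_∞(Q) = μP_vL/Δ_L + (β_3(Q)/2)(√(β_1(Q)² − β_2(Q)²) − β_1(Q)) as a function of the real parameter Q ∈ [0, L], where Δ_Q and β_0, β_1, β_2, β_3 depend on Q through their definitions. Then D^min_∞ is monotone increasing in Q: for all 0 ≤ Q ≤ Q' ≤ L, D^min_∞(Q) ≤ D^min_∞(Q'); moreover D^min_∞(L) = μP_vL/Δ_L, the steady-state MSD of standard LMS. (Corollary 2, monotonicity in the sparsity Q.) -/

import Mathlib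

lemma frac_mono_aux (X A B u v : ℝ) (hX : 0 ≤ X) (hA : 0 < A) (hB : 0 ≤ B)
    (hu : 0 ≤ u) (hv : 0 ≤ v) {s' s : ℝ} (h0 : 0 ≤ s') (h : s' ≤ s) :
    s' ^ 2 / (X + A * s' + B * s' ^ 2 + Real.sqrt (X ^ 2 + u * s' + v * s' ^ 2)) ≤
      s ^ 2 / (X + A * s + B * s ^ 2 + Real.sqrt (X ^ 2 + u * s + v * s ^ 2)) := by
  have hs : 0 ≤ s := h0.trans h
  have hWs : 0 ≤ X ^ 2 + u * s + v * s ^ 2 :=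
    add_nonneg (add_nonneg (sq_nonneg X) (mul_nonneg hu hs)) (mul_nonneg hv (sq_nonneg s))
  have hWs' : 0 ≤ X ^ 2 + u * s' + v * s' ^ 2 :=
    add_nonneg (add_nonneg (sq_nonneg X) (mul_nonneg hu h0)) (mul_nonneg hv (sq_nonneg s'))
  have hdnn : 0 ≤ X + A * s + B * s ^ 2 + Real.sqrt (X ^ 2 + u * s + v * s ^ 2) :=
    add_nonneg (add_nonneg (add_nonneg hX (mul_nonneg hA.le hs)) (mul_nonneg hB (sq_nonneg s)))
      (Real.sqrt_nonneg _)
  rcases eq_or_lt_of_le h0 with h0' | h0'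
  · rw [← h0']
    simp only [ne_eq, OfNat.ofNat_ne_zero, not_false_eq_true, zero_pow, zero_div]
    exact div_nonneg (sq_nonneg s) hdnn
  · have hsp : 0 < s := lt_of_lt_of_le h0' h
    have hdp' : 0 < X + A * s' + B * s' ^ 2 + Real.sqrt (X ^ 2 + u * s' + v * s' ^ 2) := by
      have : 0 < A * s' := mul_pos hA h0'
      have := Real.sqrt_nonneg (X ^ 2 + u * s' + v * s' ^ 2)
      nlinarith [mul_nonneg hB (sq_nonneg s')]
    have hdp : 0 < X + A * s + B * s ^ 2 + Real.sqrt (X ^ 2 + u * s + v * s ^ 2) := by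
      have : 0 < A * s := mul_pos hA hsp
      have := Real.sqrt_nonneg (X ^ 2 + u * s + v * s ^ 2)
      nlinarith [mul_nonneg hB (sq_nonneg s)]
    rw [div_le_div_iff₀ hdp' hdp]
    have h2 : s' ^ 2 ≤ s ^ 2 := pow_le_pow_left₀ h0 h 2
    have h4 : s' ^ 4 ≤ s ^ 4 := pow_le_pow_left₀ h0 h 4
    have h45 : s' ^ 4 * s ≤ s ^ 4 * s' := by
      nlinarith [mul_nonneg (mul_nonneg h0 hs) (sub_nonneg.2 (pow_le_pow_left₀ h0 h 3))]
    have hB1 : s' ^ 2 * (X + A * s + B * s ^ 2) ≤ s ^ 2 * (X + A * s' + B * s' ^ 2) := by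
      nlinarith [mul_nonneg hX (sub_nonneg.2 h2),
        mul_nonneg hA.le (mul_nonneg (mul_nonneg h0 hs) (sub_nonneg.2 h))]
    have hsq : s' ^ 2 * Real.sqrt (X ^ 2 + u * s + v * s ^ 2)
        ≤ s ^ 2 * Real.sqrt (X ^ 2 + u * s' + v * s' ^ 2) := by
      have e1 : s' ^ 2 * Real.sqrt (X ^ 2 + u * s + v * s ^ 2)
          = Real.sqrt ((s' ^ 2) ^ 2 * (X ^ 2 + u * s + v * s ^ 2)) := by
        rw [Real.sqrt_mul (sq_nonneg _), Real.sqrt_sq (sq_nonneg s')]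
      have e2 : s ^ 2 * Real.sqrt (X ^ 2 + u * s' + v * s' ^ 2)
          = Real.sqrt ((s ^ 2) ^ 2 * (X ^ 2 + u * s' + v * s' ^ 2)) := by
        rw [Real.sqrt_mul (sq_nonneg _), Real.sqrt_sq (sq_nonneg s)]
      rw [e1, e2]
      apply Real.sqrt_le_sqrt
      nlinarith [mul_nonneg (sq_nonneg X) (sub_nonneg.2 h4),
        mul_nonneg hu (sub_nonneg.2 h45),
        mul_nonneg hv (mul_nonneg (mul_nonneg (sq_nonneg s) (sq_nonneg s')) (sub_nonneg.2 h2))]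
    calc s' ^ 2 * (X + A * s + B * s ^ 2 + Real.sqrt (X ^ 2 + u * s + v * s ^ 2))
        = s' ^ 2 * (X + A * s + B * s ^ 2) + s' ^ 2 * Real.sqrt (X ^ 2 + u * s + v * s ^ 2) := by
          ring
      _ ≤ s ^ 2 * (X + A * s' + B * s' ^ 2) + s ^ 2 * Real.sqrt (X ^ 2 + u * s' + v * s' ^ 2) :=
          add_le_add hB1 hsq
      _ = s ^ 2 * (X + A * s' + B * s' ^ 2 + Real.sqrt (X ^ 2 + u * s' + v * s' ^ 2)) := by ring


set_option maxHeartbeats 1600000 in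
/-- Corollary 2 (monotonicity in the sparsity `Q`): fixing `G ≥ 0`, the minimum
steady-state MSD `D^min_∞(Q)` is monotone increasing in the real parameter
`Q ∈ [0, L]`, and `D^min_∞(L) = μP_vL/Δ_L`, the steady-state MSD of standard LMS. -/
theorem l0LMS_min_MSD_monotone_in_Q
    (L μ Px Pv α G : ℝ)
    (hL : 1 ≤ L)
    (hμ : 0 < μ) (hPx : 0 < Px) (hPv : 0 < Pv) (hα : 0 < α) (hG : 0 ≤ G)
    (hstab : (L + 2) * μ * Px < 2)
    (ΔL Δ0 Δ0' : ℝ)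
    (hΔL : ΔL = 2 - (L + 2) * μ * Px)
    (hΔ0 : Δ0 = 1 - μ * Px)
    (hΔ0' : Δ0' = 2 - μ * Px)
    (ΔQ β0 β1 β2 β3 Dmin : ℝ → ℝ)
    (hΔQ : ∀ Q : ℝ, ΔQ Q = 2 - (Q + 2) * μ * Px)
    (hβ0 : ∀ Q : ℝ, β0 Q = μ * Px * Δ0' * ΔL * G
        + 4 * α ^ 2 * ΔQ Q * (μ * Px * ΔL + Δ0 * ΔQ Q / Real.pi))
    (hβ1 : ∀ Q : ℝ, β1 Q = (Δ0' * G
        + 4 * (L - Q) * α ^ 2 * (μ * Px + 2 * Δ0 * ΔQ Q / (Real.pi * ΔL)))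
        / (μ ^ 2 * Px ^ 2 * ΔL))
    (hβ2 : ∀ Q : ℝ, β2 Q = (4 * α * (L - Q) / (μ ^ 2 * Px ^ 2 * ΔL ^ 2))
        * Real.sqrt (Δ0 * β0 Q / Real.pi))
    (hβ3 : ∀ Q : ℝ, β3 Q = 2 * μ ^ 3 * Px ^ 2 * Pv * Δ0 * ΔL / β0 Q)
    (hDmin : ∀ Q : ℝ, Dmin Q = μ * Pv * L / ΔL
        + (β3 Q / 2) * (Real.sqrt ((β1 Q) ^ 2 - (β2 Q) ^ 2) - β1 Q)) :
    (∀ Q Q' : ℝ, 0 ≤ Q → Q ≤ Q' → Q' ≤ L → Dmin Q ≤ Dmin Q') ∧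
    Dmin L = μ * Pv * L / ΔL := by
  have hπ : (0:ℝ) < Real.pi := Real.pi_pos
  have hπ0 : Real.pi ≠ 0 := hπ.ne'
  have hc : 0 < μ * Px := mul_pos hμ hPx
  have hΔLp : 0 < ΔL := by rw [hΔL]; linarith
  have hΔL0 : ΔL ≠ 0 := hΔLp.ne'
  have hcl : 3 * (μ * Px) < 2 := by nlinarith
  have hΔ0p : 0 < Δ0 := by rw [hΔ0]; linarith
  have hΔ0'p : 0 < Δ0' := by rw [hΔ0']; linarith
  -- abbreviations for the quadratic coefficients
  obtain ⟨X, hXdef⟩ : ∃ x : ℝ, x = Δ0' * G := ⟨_, rfl⟩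
  obtain ⟨A, hAdef⟩ : ∃ x : ℝ, x = 4 * α ^ 2 * (μ * Px) + 8 * α ^ 2 * Δ0 / Real.pi := ⟨_, rfl⟩
  obtain ⟨B, hBdef⟩ : ∃ x : ℝ, x = 8 * α ^ 2 * Δ0 * (μ * Px) / (Real.pi * ΔL) := ⟨_, rfl⟩
  obtain ⟨u, hudef⟩ : ∃ x : ℝ, x = 8 * X * α ^ 2 * (μ * Px) + 16 * X * α ^ 2 * Δ0 / Real.pi :=
    ⟨_, rfl⟩
  obtain ⟨v, hvdef⟩ : ∃ x : ℝ, x = 16 * α ^ 4 * (μ * Px) ^ 2 := ⟨_, rfl⟩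
  have hX : 0 ≤ X := by rw [hXdef]; exact mul_nonneg hΔ0'p.le hG
  have hA : 0 < A := by
    have h1 : 0 < 4 * α ^ 2 * (μ * Px) := by positivity
    have h2 : 0 < 8 * α ^ 2 * Δ0 / Real.pi := by positivity
    rw [hAdef]; linarith
  have hB : 0 ≤ B := by rw [hBdef]; positivity
  have hu : 0 ≤ u := by
    rw [hudef]
    have h1 : 0 ≤ 8 * X * α ^ 2 * (μ * Px) := by positivity
    have h2 : 0 ≤ 16 * X * α ^ 2 * Δ0 / Real.pi := by positivity
    linarith
  have hv : 0 ≤ v := by rw [hvdef]; positivity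
  have hK : 0 ≤ 16 * μ * Pv * Δ0 ^ 2 * α ^ 2 / (Real.pi * ΔL ^ 2) := by positivity
  have key : ∀ Q : ℝ, Q ≤ L → Dmin Q = μ * Pv * L / ΔL
      - 16 * μ * Pv * Δ0 ^ 2 * α ^ 2 / (Real.pi * ΔL ^ 2) * (L - Q) ^ 2
        / (X + A * (L - Q) + B * (L - Q) ^ 2
            + Real.sqrt (X ^ 2 + u * (L - Q) + v * (L - Q) ^ 2)) := by
    intro Q hQ
    have hs0 : 0 ≤ L - Q := by linarith
    have hΔQ' : ΔQ Q = ΔL + (L - Q) * (μ * Px) := by rw [hΔQ Q, hΔL]; ring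
    have hΔQp : 0 < ΔQ Q := by
      rw [hΔQ']; nlinarith [mul_nonneg hs0 hc.le]
    have hβ0p : 0 < β0 Q := by
      rw [hβ0 Q]
      have t1 : 0 ≤ μ * Px * Δ0' * ΔL * G := by positivity
      have t2 : 0 < 4 * α ^ 2 * ΔQ Q * (μ * Px * ΔL + Δ0 * ΔQ Q / Real.pi) :=
        mul_pos (mul_pos (by positivity) hΔQp)
          (add_pos (mul_pos hc hΔLp) (div_pos (mul_pos hΔ0p hΔQp) hπ))
      linarith
    obtain ⟨W, hWdef⟩ : ∃ w : ℝ, w = X ^ 2 + u * (L - Q) + v * (L - Q) ^ 2 := ⟨_, rfl⟩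
    obtain ⟨N1, hN1def⟩ : ∃ n : ℝ, n = X + A * (L - Q) + B * (L - Q) ^ 2 := ⟨_, rfl⟩
    rw [← hWdef, ← hN1def]
    have hW0 : 0 ≤ W := by
      rw [hWdef]
      exact add_nonneg (add_nonneg (sq_nonneg X) (mul_nonneg hu hs0))
        (mul_nonneg hv (sq_nonneg _))
    have hβ2sq : β2 Q ^ 2
        = (4 * α * (L - Q) / (μ ^ 2 * Px ^ 2 * ΔL ^ 2)) ^ 2 * (Δ0 * β0 Q / Real.pi) := by
      rw [hβ2 Q, mul_pow, Real.sq_sqrt (by positivity)]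
    have hdisc : β1 Q ^ 2 - β2 Q ^ 2 = W / ((μ * Px) ^ 2 * ΔL) ^ 2 := by
      rw [hβ1 Q, hβ2sq, hβ0 Q, hΔQ', hWdef, hudef, hvdef, hXdef]
      field_simp
      ring
    have hsd : Real.sqrt (β1 Q ^ 2 - β2 Q ^ 2) = Real.sqrt W / ((μ * Px) ^ 2 * ΔL) := by
      rw [hdisc, Real.sqrt_div hW0, Real.sqrt_sq (by positivity)]
    have hβ1' : β1 Q = N1 / ((μ * Px) ^ 2 * ΔL) := by
      rw [hβ1 Q, hΔQ', hN1def, hXdef, hAdef, hBdef]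
      field_simp
      ring
    have hN1sq : N1 ^ 2 - W
        = 16 * α ^ 2 * (L - Q) ^ 2 * Δ0 * β0 Q / (Real.pi * ΔL ^ 2) := by
      rw [hN1def, hWdef, hβ0 Q, hΔQ', hAdef, hBdef, hudef, hvdef, hXdef]
      field_simp
      ring
    have hN1nn : 0 ≤ N1 := by
      rw [hN1def]
      exact add_nonneg (add_nonneg hX (mul_nonneg hA.le hs0)) (mul_nonneg hB (sq_nonneg _))
    by_cases hden : N1 + Real.sqrt W = 0
    · -- degenerate case: both summands vanish
      have hsW : Real.sqrt W = 0 := by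
        have := Real.sqrt_nonneg W
        linarith
      have hN1z : N1 = 0 := by
        have := Real.sqrt_nonneg W
        linarith
      rw [hDmin Q, hsd, hβ1', hden, hN1z, hsW]
      simp
    · have hWW : Real.sqrt W ^ 2 = W := Real.sq_sqrt hW0
      have hsub : Real.sqrt W - N1
          = -(16 * α ^ 2 * (L - Q) ^ 2 * Δ0 * β0 Q / (Real.pi * ΔL ^ 2))
            / (N1 + Real.sqrt W) := by
        rw [eq_div_iff hden]
        linear_combination hWW - hN1sq
      have hME : μ * Pv * Δ0 / β0 Q
            * (16 * α ^ 2 * (L - Q) ^ 2 * Δ0 * β0 Q / (Real.pi * ΔL ^ 2))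
          = 16 * μ * Pv * Δ0 ^ 2 * α ^ 2 / (Real.pi * ΔL ^ 2) * (L - Q) ^ 2 := by
        field_simp
      have step1 : Dmin Q = μ * Pv * L / ΔL
          + μ * Pv * Δ0 / β0 Q * (Real.sqrt W - N1) := by
        rw [hDmin Q, hsd, hβ1', hβ3 Q]
        field_simp
      rw [step1, hsub, ← hME]
      ring
  constructor
  · intro Q Q' hQ0 hQQ' hQ'L
    rw [key Q (le_trans hQQ' hQ'L), key Q' hQ'L]
    have hmono := frac_mono_aux X A B u v hX hA hB hu hv
      (s' := L - Q') (s := L - Q) (by linarith) (by linarith)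
    have h2 := mul_le_mul_of_nonneg_left hmono hK
    rw [← mul_div_assoc, ← mul_div_assoc] at h2
    linarith
  · rw [key L le_rfl]
    norm_num
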